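/- Let f : ℂ → ℂ be an entire function and let S be a bounded domain (a nonempty bounded open connected subset of ℂ). Then f(S̃) ⊆ (f(S))~, where for a set T ⊆ ℂ, T̃ denotes the union of T with all bounded connected components of its complement ℂ \ T. -/

import Mathlib

open Set Function Bornology Metric

/-- A bounded connected component of a closed set `F ⊆ ℂ` can be enclosed by a bounded open
set whose frontier misses `F`. -/
lemma exists_open_frontier_disjoint {F : Set ℂ} (hF : IsClosed F) {z : ℂ} (hz : z ∈ F)
    (hC : Bornology.IsBounded (connectedComponentIn F z)) :
    ∃ Ω : Set ℂ, IsOpen Ω ∧ Bornology.IsBounded Ω ∧ z ∈ Ω ∧ frontier Ω ∩ F = ∅ := by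
  set C := connectedComponentIn F z with hCdef
  obtain ⟨R, hR0, hCR⟩ := hC.subset_ball_lt 0 0
  set K := F ∩ closedBall (0 : ℂ) (R + 1) with hKdef
  have hKcomp : IsCompact K := (isCompact_closedBall (0 : ℂ) (R + 1)).inter_left hF
  have hballK : ball (0 : ℂ) R ⊆ closedBall (0 : ℂ) (R + 1) :=
    ball_subset_closedBall.trans (closedBall_subset_closedBall (by linarith))
  have hzC : z ∈ C := mem_connectedComponentIn hz
  have hCK : C ⊆ K := fun x hx => ⟨connectedComponentIn_subset F z hx, hballK (hCR hx)⟩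
  have hzK : z ∈ K := hCK hzC
  have hCeq : connectedComponentIn K z = C :=
    subset_antisymm (connectedComponentIn_mono z inter_subset_left)
      (isPreconnected_connectedComponentIn.subset_connectedComponentIn hzC hCK)
  haveI : CompactSpace K := isCompact_iff_compactSpace.mp hKcomp
  set z' : K := ⟨z, hzK⟩ with hz'def
  have himg : C = Subtype.val '' connectedComponent z' := by
    rw [← hCeq, connectedComponentIn_eq_image hzK]
  -- the set of points of `K` of norm `≥ R`
  set B₀ : Set K := {x : K | R ≤ ‖(x : ℂ)‖} with hB₀def
  have hB₀closed : IsClosed B₀ :=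
    isClosed_le continuous_const (continuous_norm.comp continuous_subtype_val)
  have hB₀comp : IsCompact B₀ := hB₀closed.isCompact
  -- the connected component of `z'` misses `B₀`
  have hdisj : B₀ ∩ connectedComponent z' = ∅ := by
    ext x
    simp only [mem_inter_iff, mem_empty_iff_false, iff_false, not_and, hB₀def, mem_setOf_eq]
    intro hxB hxc
    have : (x : ℂ) ∈ C := himg ▸ ⟨x, hxc, rfl⟩
    have := mem_ball.mp (hCR this)
    simp only [dist_zero_right] at this
    linarith
  -- extract a single clopen neighbourhood missing `B₀`
  haveI : Nonempty {s : Set K // IsClopen s ∧ z' ∈ s} := ⟨⟨univ, isClopen_univ, mem_univ _⟩⟩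
  obtain ⟨⟨V, hVclopen, hz'V⟩, hVB₀⟩ :=
    hB₀comp.elim_directed_family_closed (fun s : {s : Set K // IsClopen s ∧ z' ∈ s} => (s : Set K))
      (fun s => s.2.1.isClosed)
      (by rw [← connectedComponent_eq_iInter_isClopen z', hdisj])
      (fun i j => ⟨⟨i.1 ∩ j.1, i.2.1.inter j.2.1, i.2.2, j.2.2⟩,
        inter_subset_left, inter_subset_right⟩)
  set Z : Set ℂ := Subtype.val '' V with hZdef
  have hZcomp : IsCompact Z := (hVclopen.isClosed.isCompact).image continuous_subtype_val
  have hCZ : C ⊆ Z := by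
    rw [himg]
    exact image_mono (hVclopen.connectedComponent_subset hz'V)
  have hZball : Z ⊆ ball (0 : ℂ) R := by
    rintro x ⟨y, hyV, rfl⟩
    by_contra hx
    have : y ∈ B₀ ∩ V := ⟨by simpa [hB₀def, mem_ball, dist_zero_right] using hx, hyV⟩
    rw [hVB₀] at this
    exact this
  -- `Z` is relatively open in `F`
  obtain ⟨O, hOopen, hOV⟩ := isOpen_induced_iff.mp hVclopen.isOpen
  have hZOK : Z = K ∩ O := by rw [hZdef, ← hOV, Subtype.image_preimage_coe]
  have hZeq : Z = (O ∩ ball (0 : ℂ) R) ∩ F := by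
    apply subset_antisymm
    · intro x hx
      exact ⟨⟨(hZOK ▸ hx).2, hZball hx⟩, (hZOK ▸ hx).1.1⟩
    · intro x hx
      obtain ⟨⟨hxO, hxb⟩, hxF⟩ := hx
      rw [hZOK]
      exact ⟨⟨hxF, hballK hxb⟩, hxO⟩
  have hFZclosed : IsClosed (F \ Z) := by
    have : F \ Z = F ∩ (O ∩ ball (0 : ℂ) R)ᶜ := by
      ext x
      simp only [hZeq, mem_diff, mem_inter_iff, mem_compl_iff]
      tauto
    rw [this]
    exact hF.inter (hOopen.inter isOpen_ball).isClosed_compl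
  -- separate `Z` from `F \ Z` by disjoint open sets
  obtain ⟨O₁, O₂, hO₁, hO₂, hZO₁, hFZO₂, hO₁O₂⟩ :=
    normal_separation hZcomp.isClosed hFZclosed disjoint_sdiff_right
  refine ⟨O₁ ∩ ball (0 : ℂ) R, hO₁.inter isOpen_ball, isBounded_ball.subset inter_subset_right,
    ⟨hZO₁ (hCZ hzC), hCR hzC⟩, ?_⟩
  ext x
  simp only [mem_inter_iff, mem_empty_iff_false, iff_false, not_and]
  intro hxfr hxF
  rw [(hO₁.inter isOpen_ball).frontier_eq] at hxfr
  obtain ⟨hxcl, hxΩ⟩ := hxfr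
  by_cases hxZ : x ∈ Z
  · exact hxΩ ⟨hZO₁ hxZ, hZball hxZ⟩
  · have hxO₂ : x ∈ O₂ := hFZO₂ ⟨hxF, hxZ⟩
    obtain ⟨y, hyO₂, hy⟩ := mem_closure_iff.mp hxcl O₂ hO₂ hxO₂
    exact absurd hy.1 (fun h => hO₁O₂.ne_of_mem h hyO₂ rfl)

/-- The union of `T` with all bounded connected components of its complement. -/
def fillSet (T : Set ℂ) : Set ℂ :=
  T ∪ {z | z ∉ T ∧ Bornology.IsBounded (connectedComponentIn Tᶜ z)}

/-- `f(S̃) ⊆ (f(S))~` for an entire function `f` and a bounded domain `S`. -/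
theorem stmt_7 (f : ℂ → ℂ) (hf : Differentiable ℂ f) (S : Set ℂ)
    (hopen : IsOpen S) (hconn : IsConnected S) (hbdd : Bornology.IsBounded S) :
    f '' fillSet S ⊆ fillSet (f '' S) := by
  rintro w ⟨z, hzfill, rfl⟩
  by_cases hw : f z ∈ f '' S
  · exact Or.inl hw
  rcases hzfill with hzS | ⟨hzS, hU⟩
  · exact absurd (mem_image_of_mem f hzS) hw
  -- `f` is not constant (else `f z ∈ f '' S`), so it is an open map
  have hanal : AnalyticOnNhd ℂ f univ := Complex.analyticOnNhd_univ_iff_differentiable.mpr hf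
  have hmap : ∀ s : Set ℂ, IsOpen s → IsOpen (f '' s) := by
    rcases hanal.is_constant_or_isOpen isPreconnected_univ with ⟨c, hc⟩ | h
    · exfalso
      obtain ⟨s, hs⟩ := hconn.nonempty
      exact hw ⟨s, hs, by rw [hc s (mem_univ s), hc z (mem_univ z)]⟩
    · exact fun s hs => h s (subset_univ s) hs
  -- enclose the component of `z` in `Sᶜ` by a bounded open `Ω` with `frontier Ω ⊆ S`
  obtain ⟨Ω, hΩopen, hΩbdd, hzΩ, hΩfr⟩ :=
    exists_open_frontier_disjoint hopen.isClosed_compl hzS hU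
  set O : Set ℂ := f '' Ω with hOdef
  have hOopen : IsOpen O := hmap Ω hΩopen
  have hclΩ : IsCompact (closure Ω) := hΩbdd.isCompact_closure
  have hfclΩ : IsCompact (f '' closure Ω) := hclΩ.image hf.continuous
  have hObdd : Bornology.IsBounded O :=
    hfclΩ.isBounded.subset (image_mono (f := f) subset_closure)
  have hclO : closure O ⊆ f '' closure Ω :=
    closure_minimal (image_mono (f := f) subset_closure) hfclΩ.isClosed
  have hfrO : frontier O ⊆ f '' S := by
    intro x hx
    rw [hOopen.frontier_eq] at hx
    obtain ⟨q, hq, rfl⟩ := hclO hx.1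
    have hqΩ : q ∉ Ω := fun h => hx.2 (mem_image_of_mem f h)
    have hqfr : q ∈ frontier Ω := by
      rw [hΩopen.frontier_eq]; exact ⟨hq, hqΩ⟩
    have hqS : q ∈ S := by
      by_contra hqS
      exact absurd (mem_inter hqfr hqS) (by rw [hΩfr]; exact id)
    exact mem_image_of_mem f hqS
  -- the component of `f z` in `(f '' S)ᶜ` is trapped in `O`
  refine Or.inr ⟨hw, ?_⟩
  have hwO : f z ∈ O := mem_image_of_mem f hzΩ
  have hsub : connectedComponentIn (f '' S)ᶜ (f z) ⊆ O := by
    apply IsPreconnected.subset_left_of_subset_union hOopen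
      isClosed_closure.isOpen_compl
      (disjoint_compl_right.mono_left subset_closure) ?_
      ⟨f z, mem_connectedComponentIn hw, hwO⟩
      isPreconnected_connectedComponentIn
    intro x hx
    have hxS : x ∉ f '' S := connectedComponentIn_subset _ _ hx
    by_cases hxcl : x ∈ closure O
    · left
      by_contra hxO
      have : x ∈ frontier O := by rw [hOopen.frontier_eq]; exact ⟨hxcl, hxO⟩
      exact hxS (hfrO this)
    · exact Or.inr hxcl
  exact hObdd.subset hsub
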